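/- Let 𝒮 = Sh(C, K) be the category of set-valued sheaves on a small site, and let f : X → Y be an epimorphism in 𝒮. Let f^* : Over Y ⥤ Over X be the pullback (base change) functor, and suppose given a right adjoint f_* : Over X ⥤ Over Y with an adjunction f^* ⊣ f_*. Then f^* is comonadic: the comparison functor from Over Y to the Eilenberg–Moore category of coalgebras over the comonad f^* ∘ f_* on Over X is an equivalence of categories, and under this equivalence the adjunction f^* ⊣ f_* is identified with the forgetful–cofree adjunction for that comonad. -/

import Mathlib

open CategoryTheory CategoryTheory.Limits Opposite

universe u

section Aux

variable {Cs : Type u} [SmallCategory Cs] {K : GrothendieckTopology Cs}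

/-- In a sheaf topos, the pullback of an epimorphism along any morphism is an epimorphism. -/
lemma epi_pullback_fst_of_epi {X Y B : Sheaf K (Type u)} (f : X ⟶ Y) [Epi f] (h : B ⟶ Y) :
    Epi (pullback.fst h f) := by
  have hf : Sheaf.IsLocallySurjective f := (Sheaf.isLocallySurjective_iff_epi f).mpr inferInstance
  have : Sheaf.IsLocallySurjective (pullback.fst h f) := by
    constructor
    intro U s
    refine K.superset_covering ?_ (Presheaf.imageSieve_mem K f.hom (h.hom.app (op U) s))
    rintro V g ⟨t, ht⟩
    -- need a section of the pullback over V mapping to `B.val.map g.op s`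
    let T : Sheaf K (Type u) ⥤ Type u :=
      sheafToPresheaf K (Type u) ⋙ (evaluation Csᵒᵖ (Type u)).obj (op V)
    haveI : PreservesLimitsOfSize.{u, u} (sheafToPresheaf K (Type u)) := inferInstance
    haveI : PreservesLimitsOfSize.{u, u} T := comp_preservesLimits _ _
    let b : B.val.obj (op V) := B.val.map g.op s
    have hcomp : (T.map h) b = (T.map f) t := by
      have := ConcreteCategory.congr_hom (h.hom.naturality g.op) s
      exact this.trans ht.symm
    let q : Limits.pullback (T.map h) (T.map f) :=
      (Types.pullbackIsoPullback (T.map h) (T.map f)).inv ⟨(b, t), hcomp⟩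
    refine ⟨(PreservesPullback.iso T h f).inv q, ?_⟩
    have h1 : (PreservesPullback.iso T h f).inv ≫ T.map (pullback.fst h f) =
        pullback.fst (T.map h) (T.map f) := PreservesPullback.iso_inv_fst T h f
    have h2 := ConcreteCategory.congr_hom h1 q
    exact h2.trans (Types.pullbackIsoPullback_inv_fst_apply (T.map h) (T.map f) ⟨(b, t), hcomp⟩)
  exact Sheaf.epi_of_isLocallySurjective _

end Aux

section Aux2

variable {Cs : Type u} [SmallCategory Cs] {K : GrothendieckTopology Cs}

/-- Pullback along an epimorphism of sheaves reflects isomorphisms. -/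
lemma over_pullback_reflectsIsomorphisms {X Y : Sheaf K (Type u)} (f : X ⟶ Y) [Epi f] :
    (Over.pullback f : Over Y ⥤ Over X).ReflectsIsomorphisms := by
  constructor
  intro A B g hg
  have hm : IsIso ((Over.pullback f).map g).left :=
    (inferInstance : IsIso ((Over.forget X).map ((Over.pullback f).map g)))
  set m := ((Over.pullback f).map g).left with hmdef
  have hmfst : m ≫ pullback.fst B.hom f = pullback.fst A.hom f ≫ g.left := by
    simp [hmdef, Over.pullback]
    exact pullback.lift_fst _ _ _
  have hmsnd : m ≫ pullback.snd B.hom f = pullback.snd A.hom f := by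
    simp [hmdef, Over.pullback]
    exact pullback.lift_snd _ _ _
  -- g.left is epi
  haveI : Epi (pullback.fst B.hom f) := epi_pullback_fst_of_epi f B.hom
  have hepi : Epi (pullback.fst A.hom f ≫ g.left) := by
    rw [← hmfst]; exact epi_comp m _
  haveI : Epi g.left := epi_of_epi (pullback.fst A.hom f) g.left
  -- g.left is mono
  haveI : Mono g.left := by
    constructor
    intro T u v huv
    have hAv : v ≫ A.hom = u ≫ A.hom := by
      rw [← Over.w g, ← Category.assoc, ← Category.assoc, huv]
    haveI : Epi (pullback.fst (u ≫ A.hom) f) := epi_pullback_fst_of_epi f (u ≫ A.hom)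
    set q := pullback.fst (u ≫ A.hom) f
    set w := pullback.snd (u ≫ A.hom) f
    have hqw : (q ≫ u) ≫ A.hom = w ≫ f := by
      rw [Category.assoc]; exact pullback.condition
    have hqw' : (q ≫ v) ≫ A.hom = w ≫ f := by
      rw [Category.assoc, hAv, ← Category.assoc]; exact hqw
    have key : pullback.lift (q ≫ u) w hqw ≫ m = pullback.lift (q ≫ v) w hqw' ≫ m := by
      apply pullback.hom_ext
      · rw [Category.assoc, Category.assoc, hmfst, ← Category.assoc, ← Category.assoc,
          pullback.lift_fst, pullback.lift_fst, Category.assoc, Category.assoc, huv]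
      · rw [Category.assoc, Category.assoc, hmsnd, pullback.lift_snd, pullback.lift_snd]
    have key2 : pullback.lift (q ≫ u) w hqw = pullback.lift (q ≫ v) w hqw' := by
      rwa [← cancel_mono m]
    have := congrArg (fun z => z ≫ pullback.fst A.hom f) key2
    simp only [Category.assoc, pullback.lift_fst] at this
    exact (cancel_epi q).mp this
  haveI : IsIso g.left := isIso_of_mono_of_epi g.left
  haveI : IsIso ((Over.forget Y).map g) := ‹IsIso g.left›
  exact isIso_of_reflects_iso g (Over.forget Y)

end Aux2



/-- comonadic descent along an epimorphism in a Grothendieck topos.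
For an epimorphism `f : X ⟶ Y` in a category of set-valued sheaves on a small site, the
base change functor `f^* = Over.pullback f : Over Y ⥤ Over X` is comonadic with respect to
any adjunction `f^* ⊣ f_*`: the comparison functor to the Eilenberg–Moore category of
coalgebras over the comonad `f^* ∘ f_*` on `Over X` is an equivalence, and under this
equivalence the adjunction `f^* ⊣ f_*` is identified with the forgetful–cofree adjunction
(`f^*` with the forgetful functor, `f_*` with the cofree functor). -/
theorem statement17 {Cs : Type u} [SmallCategory Cs] (K : GrothendieckTopology Cs)
    {X Y : Sheaf K (Type u)} (f : X ⟶ Y) [Epi f]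
    (fstar : Over X ⥤ Over Y) (adj : Over.pullback f ⊣ fstar) :
    (Comonad.comparison adj).IsEquivalence ∧
    Nonempty (Comonad.comparison adj ⋙ adj.toComonad.forget ≅ Over.pullback f) ∧
    Nonempty (fstar ⋙ Comonad.comparison adj ≅ adj.toComonad.cofree) := by
  haveI : (Over.pullback f : Over Y ⥤ Over X).ReflectsIsomorphisms :=
    over_pullback_reflectsIsomorphisms f
  haveI : PreservesLimitsOfSize.{0, 0} (Over.pullback f : Over Y ⥤ Over X) := by
    haveI := (Over.mapPullbackAdj f).rightAdjoint_preservesLimits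
    exact preservesLimitsOfSize_shrink _
  haveI : Comonad.PreservesLimitOfIsCoreflexivePair (Over.pullback f : Over Y ⥤ Over X) :=
    ⟨fun _ _ _ _ => inferInstance⟩
  haveI : HasCoreflexiveEqualizers (Over Y) := inferInstance
  exact ⟨(Comonad.comonadicOfHasPreservesCoreflexiveEqualizersOfReflectsIsomorphisms adj).eqv,
    ⟨Comonad.comparisonForget adj⟩, ⟨eqToIso (Comonad.left_comparison adj)⟩⟩
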